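/- In any matching M between two sequences (with monotone non-crossing edges, full coverage, and endpoints matched), if an edge e of M joins two positions that both have degree greater than 1 in M, then M minus e is still a valid matching, and hence a minimum-cost matching contains no edge both of whose endpoints have degree greater than 1. -/
import Mathlib


/-- `IsMatching n ℓ M`: `M` is a (DTW-style) matching between positions `0,…,n-1` of a
query and positions `0,…,ℓ-1` of an input: every position is covered, the first positions
are matched to each other and the last positions are matched to each other, and edges are
monotone non-crossing. -/
def IsMatching (n ℓ : ℕ) (M : Finset (ℕ × ℕ)) : Prop :=
  (∀ e ∈ M, e.1 < n ∧ e.2 < ℓ) ∧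
  (∀ i, i < n → ∃ j, (i, j) ∈ M) ∧
  (∀ j, j < ℓ → ∃ i, (i, j) ∈ M) ∧
  (0, 0) ∈ M ∧ (n - 1, ℓ - 1) ∈ M ∧
  (∀ e ∈ M, ∀ f ∈ M, (f.1 < e.1 → f.2 ≤ e.2) ∧ (f.2 < e.2 → f.1 ≤ e.1))

/-- The cost of a matching: the sum over edges `(i,j)` of `|q[i] - s[j]|`. -/
noncomputable def matchCost (q s : List ℝ) (M : Finset (ℕ × ℕ)) : ℝ :=
  ∑ e ∈ M, |q.getD e.1 0 - s.getD e.2 0|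

/-- The degree of query position `i` in `M`. -/
def degQ (M : Finset (ℕ × ℕ)) (i : ℕ) : ℕ := (M.filter (fun e => e.1 = i)).card

/-- The degree of input position `j` in `M`. -/
def degS (M : Finset (ℕ × ℕ)) (j : ℕ) : ℕ := (M.filter (fun e => e.2 = j)).card

/-- The cost of a matching with respect to an arbitrary nonnegative edge-weight
function `w`. -/
noncomputable def wCost (w : ℕ × ℕ → ℝ) (M : Finset (ℕ × ℕ)) : ℝ := ∑ e ∈ M, w e

/-- In any matching `M`, if an edge `e` joins two positions both of degree
greater than `1`, then `M \ {e}` is still a valid matching of no greater cost (for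
nonnegative edge costs); hence, for strictly positive edge costs, a minimum-cost matching
contains no edge both of whose endpoints have degree greater than `1`. -/
theorem matching_no_edge_with_both_degrees_large
    (n ℓ : ℕ) (hn : 1 ≤ n) (hℓ : 1 ≤ ℓ)
    (w : ℕ × ℕ → ℝ) (hw : ∀ e, 0 ≤ w e)
    (M : Finset (ℕ × ℕ)) (hM : IsMatching n ℓ M) :
    (∀ e ∈ M, 1 < degQ M e.1 → 1 < degS M e.2 →
      IsMatching n ℓ (M.erase e) ∧ wCost w (M.erase e) ≤ wCost w M) ∧
    ((∀ e, 0 < w e) →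
      (∀ M' : Finset (ℕ × ℕ), IsMatching n ℓ M' → wCost w M ≤ wCost w M') →
      ∀ e ∈ M, ¬(1 < degQ M e.1 ∧ 1 < degS M e.2)) := by

  obtain ⟨hbd, hcovQ, hcovS, h00, hnl, hmono⟩ := hM
  have key : ∀ e ∈ M, 1 < degQ M e.1 → 1 < degS M e.2 → IsMatching n ℓ (M.erase e) := by
    intro e he hq hs
    obtain ⟨f, hf, hfe⟩ := Finset.exists_mem_ne hq e
    obtain ⟨g, hg, hge⟩ := Finset.exists_mem_ne hs e
    rw [Finset.mem_filter] at hf hg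
    obtain ⟨hfM, hf1⟩ := hf
    obtain ⟨hgM, hg2⟩ := hg
    have hf2 : f.2 ≠ e.2 := by
      intro h; exact hfe (Prod.ext hf1 h)
    have hg1 : g.1 ≠ e.1 := by
      intro h; exact hge (Prod.ext h hg2)
    have hne00 : e ≠ (0, 0) := by
      rintro rfl
      have hg1' : 0 < g.1 := Nat.pos_of_ne_zero hg1
      have := (hmono g hgM f hfM).1 (by simpa [hf1] using hg1')
      have : f.2 = 0 := Nat.le_zero.mp (by simpa [hg2] using this)
      exact hf2 (by simpa using this)
    have hnenl : e ≠ (n - 1, ℓ - 1) := by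
      rintro rfl
      have hgb := hbd g hgM
      have hfb := hbd f hfM
      have hg1' : g.1 < n - 1 := lt_of_le_of_ne (Nat.le_sub_one_of_lt hgb.1) hg1
      have := (hmono f hfM g hgM).1 (by simpa [hf1] using hg1')
      have hf2' : ℓ - 1 ≤ f.2 := by simpa [hg2] using this
      have : f.2 = ℓ - 1 := le_antisymm (Nat.le_sub_one_of_lt hfb.2) hf2'
      exact hf2 (by simpa using this)
    refine ⟨fun x hx => hbd x (Finset.mem_of_mem_erase hx), ?_, ?_, ?_, ?_, ?_⟩
    · intro i hi
      obtain ⟨j, hj⟩ := hcovQ i hi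
      by_cases hje : (i, j) = e
      · refine ⟨f.2, Finset.mem_erase.mpr ⟨?_, ?_⟩⟩
        · intro h; apply hfe; rw [← h]; exact Prod.ext (by simp [hf1, ← hje]) rfl
        · have hx : (i, f.2) = f := Prod.ext (by rw [hf1, ← hje]) rfl
          rw [hx]; exact hfM
      · exact ⟨j, Finset.mem_erase.mpr ⟨hje, hj⟩⟩
    · intro j hj
      obtain ⟨i, hi⟩ := hcovS j hj
      by_cases hie : (i, j) = e
      · refine ⟨g.1, Finset.mem_erase.mpr ⟨?_, ?_⟩⟩
        · intro h; apply hge; rw [← h]; exact Prod.ext rfl (by simp [hg2, ← hie])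
        · have hx : (g.1, j) = g := Prod.ext rfl (by rw [hg2, ← hie])
          rw [hx]; exact hgM
      · exact ⟨i, Finset.mem_erase.mpr ⟨hie, hi⟩⟩
    · exact Finset.mem_erase.mpr ⟨Ne.symm hne00, h00⟩
    · exact Finset.mem_erase.mpr ⟨Ne.symm hnenl, hnl⟩
    · intro x hx y hy
      exact hmono x (Finset.mem_of_mem_erase hx) y (Finset.mem_of_mem_erase hy)
  have costle : ∀ e ∈ M, wCost w (M.erase e) ≤ wCost w M := by
    intro e he
    exact Finset.sum_le_sum_of_subset_of_nonneg (Finset.erase_subset e M)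
      (fun x _ _ => hw x)
  refine ⟨fun e he hq hs => ⟨key e he hq hs, costle e he⟩, ?_⟩
  intro hpos hmin e he ⟨hq, hs⟩
  have h1 := hmin (M.erase e) (key e he hq hs)
  have h2 : wCost w (M.erase e) = wCost w M - w e := Finset.sum_erase_eq_sub he
  have := hpos e
  linarith
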